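/- Let f be a real polynomial with all roots real and simple. Then for every (a,b) ∈ ℝ² with (a,b) ≠ (0,0), the polynomial a·f + b·f′ has all roots real and simple, and sep(a·f + b·f′) ≥ sep(f). -/

import Mathlib

open Polynomial

/-- A real polynomial all of whose roots are real and simple. -/
def SimpleRealRoots (p : Polynomial ℝ) : Prop :=
  p ≠ 0 ∧ p.roots.card = p.natDegree ∧ p.roots.Nodup

/-- The minimal distance between distinct real roots of `p`
(`+∞` if `p` has at most one root). -/
noncomputable def rootSep (p : Polynomial ℝ) : ENNReal :=
  ⨅ (s : ℝ) (t : ℝ) (_ : p.IsRoot s) (_ : p.IsRoot t) (_ : s ≠ t), ENNReal.ofReal |s - t|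

open Finset in
lemma aux_sumLeft (m : ℕ) (A B : ℕ → ℝ) (δ u v : ℝ) (hδ : 0 < δ) (hu : 0 < u) (hv : 0 < v)
    (hsum : u + v < δ)
    (hA : ∀ k < m, ((k : ℝ) + 1) * δ - u ≤ A k) (hB : ∀ k < m, ((k : ℝ) + 1) * δ + v ≤ B k) :
    ∑ k ∈ Finset.range m, (A k * B k)⁻¹ < ((u + v) * v)⁻¹ := by
  have huv : 0 < u + v := by linarith
  set ψ : ℕ → ℝ := fun k => (((k : ℝ) + 1) * δ - u)⁻¹ with hψdef
  have hden : ∀ k : ℕ, 0 < ((k : ℝ) + 1) * δ - u := by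
    intro k
    have h1 : (0 : ℝ) ≤ (k : ℝ) := Nat.cast_nonneg k
    nlinarith
  have hψpos : ∀ k : ℕ, 0 < ψ k := fun k => inv_pos.mpr (hden k)
  have hterm : ∀ k ∈ Finset.range m, (A k * B k)⁻¹ ≤ (u + v)⁻¹ * (ψ k - ψ (k + 1)) := by
    intro k hk
    rw [Finset.mem_range] at hk
    have hAk := hA k hk
    have hBk := hB k hk
    have hak : 0 < ((k : ℝ) + 1) * δ - u := hden k
    have hbk : 0 < ((k : ℝ) + 1) * δ + v := by positivity
    have hA0 : 0 < A k := lt_of_lt_of_le hak hAk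
    have hB0 : 0 < B k := lt_of_lt_of_le hbk hBk
    have h1 : (A k * B k)⁻¹ ≤ ((((k : ℝ) + 1) * δ - u) * (((k : ℝ) + 1) * δ + v))⁻¹ := by
      apply inv_anti₀ (by positivity)
      exact mul_le_mul hAk hBk (le_of_lt hbk) (le_of_lt hA0)
    refine h1.trans ?_
    have h2 : (((k : ℝ) + 1) * δ + v)⁻¹ ≥ ψ (k + 1) := by
      apply inv_anti₀ hbk
      have : ((k : ℝ) + 1 + 1) * δ - u = ((k : ℝ) + 1) * δ + (δ - u) := by ring
      show ((k : ℝ) + 1) * δ + v ≤ (((k+1 : ℕ) : ℝ) + 1) * δ - u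
      push_cast
      nlinarith
    have h3 : ((((k : ℝ) + 1) * δ - u) * (((k : ℝ) + 1) * δ + v))⁻¹
        = (u + v)⁻¹ * (ψ k - (((k : ℝ) + 1) * δ + v)⁻¹) := by
      simp only [hψdef]
      field_simp
      ring
    rw [h3]
    have : ψ k - (((k : ℝ) + 1) * δ + v)⁻¹ ≤ ψ k - ψ (k + 1) := by
      have := h2; linarith
    exact mul_le_mul_of_nonneg_left this (by positivity)
  calc ∑ k ∈ Finset.range m, (A k * B k)⁻¹
      ≤ ∑ k ∈ Finset.range m, (u + v)⁻¹ * (ψ k - ψ (k + 1)) := Finset.sum_le_sum hterm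
    _ = (u + v)⁻¹ * (ψ 0 - ψ m) := by rw [← Finset.mul_sum, Finset.sum_range_sub' ψ m]
    _ < (u + v)⁻¹ * ψ 0 := by
        have := hψpos m
        have h0 : (0:ℝ) < (u+v)⁻¹ := by positivity
        nlinarith
    _ ≤ ((u + v) * v)⁻¹ := by
        have h0 : ψ 0 = (δ - u)⁻¹ := by simp [hψdef]
        rw [h0, ← mul_inv]
        apply inv_anti₀ (by positivity)
        have : v ≤ δ - u := by linarith
        nlinarith

open Finset in
lemma aux_key (n : ℕ) (hn : 0 < n) (r : ℕ → ℝ) (δ x y : ℝ) (hδ : 0 < δ)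
    (hgap : ∀ i j, i < j → j < n → ((j - i : ℕ) : ℝ) * δ ≤ r j - r i)
    (hx : ∀ i < n, r i ≠ x) (hy : ∀ i < n, r i ≠ y)
    (hxy : x < y) (hclose : y - x < δ) :
    ∑ i ∈ Finset.range n, ((x - r i) * (y - r i))⁻¹ ≠ 0 := by
  set t : ℕ → ℝ := fun i => ((x - r i) * (y - r i))⁻¹ with htdef
  by_cases hmid : ∃ i0, i0 < n ∧ x < r i0 ∧ r i0 < y
  · obtain ⟨i0, hi0n, hxr, hry⟩ := hmid
    set u := r i0 - x with hudef
    set v := y - r i0 with hvdef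
    have hu : 0 < u := by simp [hudef]; linarith
    have hv : 0 < v := by simp [hvdef]; linarith
    have huv : u + v < δ := by simp [hudef, hvdef]; linarith
    have huvpos : 0 < u + v := by linarith
    -- split the sum
    have hsplit : ∑ i ∈ Finset.range n, t i
        = (∑ i ∈ Finset.range i0, t i) + t i0 + ∑ i ∈ Finset.Ico (i0+1) n, t i := by
      rw [← Finset.sum_range_add_sum_Ico t (Nat.succ_le_of_lt hi0n), Finset.sum_range_succ]
    -- middle term
    have hmidterm : t i0 = -((u * v)⁻¹) := by
      have : (x - r i0) * (y - r i0) = -(u * v) := by simp [hudef, hvdef]; ring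
      rw [htdef]; simp only [this]
      rw [inv_neg]
    -- left sum
    have hL : ∑ i ∈ Finset.range i0, t i < ((u + v) * v)⁻¹ := by
      rw [← Finset.sum_range_reflect t i0]
      have := aux_sumLeft i0 (fun k => x - r (i0 - 1 - k)) (fun k => y - r (i0 - 1 - k))
        δ u v hδ hu hv huv ?_ ?_
      · exact this
      · intro k hk
        have hlt : i0 - 1 - k < i0 := by omega
        have hgapk := hgap (i0 - 1 - k) i0 hlt hi0n
        have hcast : ((i0 - (i0 - 1 - k) : ℕ) : ℝ) = (k : ℝ) + 1 := by
          have : (i0 - (i0 - 1 - k) : ℕ) = k + 1 := by omega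
          rw [this]; push_cast; ring
        rw [hcast] at hgapk
        simp only [hudef] at *
        linarith
      · intro k hk
        have hlt : i0 - 1 - k < i0 := by omega
        have hgapk := hgap (i0 - 1 - k) i0 hlt hi0n
        have hcast : ((i0 - (i0 - 1 - k) : ℕ) : ℝ) = (k : ℝ) + 1 := by
          have : (i0 - (i0 - 1 - k) : ℕ) = k + 1 := by omega
          rw [this]; push_cast; ring
        rw [hcast] at hgapk
        simp only [hvdef] at *
        linarith
    -- right sum
    have hR : ∑ i ∈ Finset.Ico (i0+1) n, t i < ((v + u) * u)⁻¹ := by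
      rw [Finset.sum_Ico_eq_sum_range]
      have := aux_sumLeft (n - (i0+1)) (fun k => r (i0 + 1 + k) - y) (fun k => r (i0 + 1 + k) - x)
        δ v u hδ hv hu (by linarith) ?_ ?_
      · refine lt_of_le_of_lt (le_of_eq (Finset.sum_congr rfl fun k _ => ?_)) this
        show ((x - r (i0+1+k)) * (y - r (i0+1+k)))⁻¹ = _
        rw [show (x - r (i0+1+k)) * (y - r (i0+1+k)) = (r (i0+1+k) - y) * (r (i0+1+k) - x) by ring]
      · intro k hk
        have hgapk := hgap i0 (i0 + 1 + k) (by omega) (by omega)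
        have hcast : ((i0 + 1 + k - i0 : ℕ) : ℝ) = (k : ℝ) + 1 := by
          have : (i0 + 1 + k - i0 : ℕ) = k + 1 := by omega
          rw [this]; push_cast; ring
        rw [hcast] at hgapk
        simp only [hvdef] at *
        linarith
      · intro k hk
        have hgapk := hgap i0 (i0 + 1 + k) (by omega) (by omega)
        have hcast : ((i0 + 1 + k - i0 : ℕ) : ℝ) = (k : ℝ) + 1 := by
          have : (i0 + 1 + k - i0 : ℕ) = k + 1 := by omega
          rw [this]; push_cast; ring
        rw [hcast] at hgapk
        simp only [hudef] at *
        linarith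
    -- combine
    have hzero : ((u + v) * v)⁻¹ + ((v + u) * u)⁻¹ = (u * v)⁻¹ := by
      field_simp
      ring
    have : ∑ i ∈ Finset.range n, t i < 0 := by
      rw [hsplit, hmidterm]
      have := hzero
      linarith
    exact ne_of_lt this
  · push_neg at hmid
    have hpos : ∀ i ∈ Finset.range n, 0 < t i := by
      intro i hi
      rw [Finset.mem_range] at hi
      rcases lt_trichotomy (r i) x with h | h | h
      · have : y - r i > 0 := by linarith
        rw [htdef]
        have : 0 < (x - r i) * (y - r i) := by nlinarith
        positivity
      · exact absurd h (hx i hi)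
      · have h2 := hmid i hi h
        have h3 : y < r i := lt_of_le_of_ne h2 (Ne.symm (hy i hi))
        · rw [htdef]
          have : 0 < (x - r i) * (y - r i) := by nlinarith
          positivity
    exact ne_of_gt (Finset.sum_pos hpos ⟨0, Finset.mem_range.mpr hn⟩)

open Finset in
lemma aux_struct (f : Polynomial ℝ) (hf0 : f ≠ 0)
    (hcard : Multiset.card f.roots = f.natDegree) (hnodup : f.roots.Nodup)
    (hn : 0 < f.natDegree) :
    ∃ r : ℕ → ℝ,
      (∀ i j, i < j → j < f.natDegree → r i < r j) ∧
      (∀ x, f.IsRoot x ↔ ∃ k, k < f.natDegree ∧ r k = x) ∧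
      (∀ x, f.eval x = f.leadingCoeff * ∏ k ∈ Finset.range f.natDegree, (x - r k)) ∧
      (∀ x, f.derivative.eval x = f.leadingCoeff *
        ∑ k ∈ Finset.range f.natDegree, ∏ j ∈ (Finset.range f.natDegree).erase k, (x - r j)) := by
  classical
  set n := f.natDegree with hndef
  set s : Finset ℝ := f.roots.toFinset with hsdef
  have hsval : s.val = f.roots := Multiset.dedup_eq_self.mpr hnodup
  have hscard : s.card = n := by
    show Multiset.card s.val = n
    rw [hsval, hcard]
  set e := s.orderIsoOfFin hscard with hedef
  set r : ℕ → ℝ := fun k => (e ⟨min k (n-1), by omega⟩ : ℝ) with hrdef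
  have hre : ∀ (k : ℕ) (h : k < n), (e ⟨k, h⟩ : ℝ) = r k := by
    intro k h
    have : (⟨min k (n-1), by omega⟩ : Fin n) = ⟨k, h⟩ := by
      apply Fin.ext; simp; omega
    rw [hrdef]; simp only [this]
  have hmono : ∀ i j, i < j → j < n → r i < r j := by
    intro i j hij hjn
    have hin : i < n := lt_trans hij hjn
    rw [← hre i hin, ← hre j hjn]
    have : (⟨i, hin⟩ : Fin n) < ⟨j, hjn⟩ := by simp [Fin.lt_def]; omega
    exact_mod_cast (e.lt_iff_lt.mpr this)
  have hmem : ∀ (k : ℕ), k < n → r k ∈ s := by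
    intro k hk
    rw [← hre k hk]
    exact (e ⟨k, hk⟩).2
  have hsurj : ∀ x ∈ s, ∃ k, k < n ∧ r k = x := by
    intro x hx
    obtain ⟨i, hi⟩ := e.surjective ⟨x, hx⟩
    exact ⟨i.1, i.2, by rw [← hre i.1 i.2]; rw [show (⟨i.1, i.2⟩ : Fin n) = i from Fin.ext rfl, hi]⟩
  have hroots_iff : ∀ x, f.IsRoot x ↔ ∃ k, k < n ∧ r k = x := by
    intro x
    constructor
    · intro hx
      exact hsurj x (Multiset.mem_toFinset.mpr ((mem_roots hf0).mpr hx))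
    · rintro ⟨k, hk, rfl⟩
      exact (mem_roots hf0).mp (Multiset.mem_toFinset.mp (hmem k hk))
  -- product formula (polynomial level)
  have hsp : f.Splits := (splits_iff_card_roots).mpr hcard
  have hinj : ∀ i j, i < n → j < n → r i = r j → i = j := by
    intro i j hi hj hij
    rcases lt_trichotomy i j with h | h | h
    · exact absurd hij (ne_of_lt (hmono i j h hj))
    · exact h
    · exact absurd hij.symm (ne_of_lt (hmono j i h hi))
  have hprodeq : (Multiset.map (fun a => X - C a) f.roots).prod
      = ∏ k ∈ Finset.range n, (X - C (r k)) := by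
    rw [← hsval, ← Finset.prod_eq_multiset_prod]
    refine (Finset.prod_bij (fun (k : ℕ) (_ : k ∈ Finset.range n) => r k) ?_ ?_ ?_ ?_).symm
    · intro k hk; exact hmem k (Finset.mem_range.mp hk)
    · intro i hi j hj h
      exact hinj i j (Finset.mem_range.mp hi) (Finset.mem_range.mp hj) h
    · intro x hx
      obtain ⟨k, hk, hrk⟩ := hsurj x hx
      exact ⟨k, Finset.mem_range.mpr hk, hrk⟩
    · intro k _; rfl
  have hfactor : f = C f.leadingCoeff * ∏ k ∈ Finset.range n, (X - C (r k)) := by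
    have h := hsp.eq_prod_roots
    rw [hprodeq] at h
    exact h
  have heval : ∀ x, f.eval x = f.leadingCoeff * ∏ k ∈ Finset.range n, (x - r k) := by
    intro x
    conv_lhs => rw [hfactor]
    simp [eval_prod]
  have hderiv : f.derivative = C f.leadingCoeff *
      ∑ k ∈ Finset.range n, ∏ j ∈ (Finset.range n).erase k, (X - C (r j)) := by
    conv_lhs => rw [hfactor]
    rw [derivative_C_mul]
    congr 1
    rw [Finset.prod_eq_multiset_prod, derivative_prod]
    rw [Finset.sum_eq_multiset_sum]
    congr 1
    apply Multiset.map_congr rfl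
    intro k hk
    rw [show derivative (X - C (r k)) = 1 by simp]
    rw [mul_one, ← Finset.erase_val, ← Finset.prod_eq_multiset_prod]
  have hderiveval : ∀ x, f.derivative.eval x = f.leadingCoeff *
      ∑ k ∈ Finset.range n, ∏ j ∈ (Finset.range n).erase k, (x - r j) := by
    intro x
    rw [hderiv]
    simp [eval_finset_sum, eval_prod]
  exact ⟨r, hmono, hroots_iff, heval, hderiveval⟩

open Finset in
lemma aux_ratio (n : ℕ) (K : ℝ) (r : ℕ → ℝ) (f : Polynomial ℝ)
    (heval : ∀ x, f.eval x = K * ∏ k ∈ Finset.range n, (x - r k))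
    (hderiveval : ∀ x, f.derivative.eval x = K *
      ∑ k ∈ Finset.range n, ∏ j ∈ (Finset.range n).erase k, (x - r j))
    (x : ℝ) (hx : ∀ k, k < n → r k ≠ x) :
    f.derivative.eval x = f.eval x * ∑ k ∈ Finset.range n, (x - r k)⁻¹ := by
  have hne : ∀ k ∈ Finset.range n, x - r k ≠ 0 := by
    intro k hk
    have := hx k (Finset.mem_range.mp hk)
    intro h; exact this (by linarith [sub_eq_zero.mp h])
  rw [hderiveval, heval, Finset.mul_sum, Finset.mul_sum]
  apply Finset.sum_congr rfl
  intro k hk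
  have h1 : (x - r k) * ∏ j ∈ (Finset.range n).erase k, (x - r j)
      = ∏ j ∈ Finset.range n, (x - r j) := Finset.mul_prod_erase _ (fun j => x - r j) hk
  have h2 : ∏ j ∈ (Finset.range n).erase k, (x - r j)
      = (∏ j ∈ Finset.range n, (x - r j)) * (x - r k)⁻¹ := by
    field_simp [hne k hk]
    linear_combination h1
  rw [h2]; ring

open Finset in
lemma aux_deriv_root (n : ℕ) (K : ℝ) (hK : K ≠ 0) (r : ℕ → ℝ)
    (hinj : ∀ i j, i < n → j < n → r i = r j → i = j)
    (f : Polynomial ℝ)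
    (hderiveval : ∀ x, f.derivative.eval x = K *
      ∑ k ∈ Finset.range n, ∏ j ∈ (Finset.range n).erase k, (x - r j))
    (k : ℕ) (hk : k < n) : f.derivative.eval (r k) ≠ 0 := by
  rw [hderiveval]
  have hsum : ∑ k' ∈ Finset.range n, ∏ j ∈ (Finset.range n).erase k', (r k - r j)
      = ∏ j ∈ (Finset.range n).erase k, (r k - r j) := by
    apply Finset.sum_eq_single
    · intro b hb hbk
      apply Finset.prod_eq_zero (i := k)
      · exact Finset.mem_erase.mpr ⟨fun h => hbk (by rw [h]), Finset.mem_range.mpr hk⟩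
      · simp
    · intro h; exact absurd (Finset.mem_range.mpr hk) h
  rw [hsum]
  apply mul_ne_zero hK
  rw [Finset.prod_ne_zero_iff]
  intro j hj
  obtain ⟨hjk, hjn⟩ := Finset.mem_erase.mp hj
  rw [Finset.mem_range] at hjn
  intro h
  have : r k = r j := by linarith [sub_eq_zero.mp h]
  exact hjk (hinj j k hjn hk this.symm)

open Finset in
lemma aux_count_finish (g : Polynomial ℝ) (hg0 : g ≠ 0) (T : Finset ℝ)
    (hT : ∀ z ∈ T, g.IsRoot z) (hcard : g.natDegree ≤ T.card) :
    Multiset.card g.roots = g.natDegree ∧ g.roots.Nodup := by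
  classical
  have hle : T.val ≤ g.roots := by
    rw [Multiset.le_iff_count]
    intro z
    by_cases hz : z ∈ T
    · have h1 : Multiset.count z T.val = 1 := by
        rw [Multiset.count_eq_one_of_mem T.nodup hz]
      rw [h1, count_roots]
      exact (rootMultiplicity_pos hg0).mpr (hT z hz)
    · rw [Multiset.count_eq_zero_of_notMem (by simpa using hz)]
      exact Nat.zero_le _
  have h2 : Multiset.card g.roots ≤ Multiset.card T.val := by
    calc Multiset.card g.roots ≤ g.natDegree := card_roots' g
      _ ≤ T.card := hcard
      _ = Multiset.card T.val := rfl
  have heq : g.roots = T.val := (Multiset.eq_of_le_of_card_le hle h2).symm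
  constructor
  · apply le_antisymm (card_roots' g)
    rw [heq]; exact hcard
  · rw [heq]; exact T.nodup

open Finset in
lemma aux_rolle (f : Polynomial ℝ) (a b : ℝ) (hb : b ≠ 0) (z w : ℝ) (hzw : z < w)
    (hz : f.eval z = 0) (hw : f.eval w = 0) :
    ∃ c ∈ Set.Ioo z w, (a • f + b • f.derivative).eval c = 0 := by
  set H : ℝ → ℝ := fun x => Real.exp ((a/b) * x) * f.eval x with hHdef
  have hH : ∀ x, HasDerivAt H
      (Real.exp ((a/b) * x) * ((a/b) * f.eval x + f.derivative.eval x)) x := by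
    intro x
    have h1 : HasDerivAt (fun x : ℝ => (a/b) * x) (a/b) x := by
      simpa using (hasDerivAt_id x).const_mul (a/b)
    have h2 := h1.exp
    have h3 := h2.mul (f.hasDerivAt x)
    exact h3.congr_deriv (by ring)
  have hcont : ContinuousOn H (Set.Icc z w) :=
    fun x _ => ((hH x).continuousAt).continuousWithinAt
  have hzw0 : H z = H w := by simp [hHdef, hz, hw]
  obtain ⟨c, hc, hderiv⟩ := exists_deriv_eq_zero hzw hcont hzw0
  refine ⟨c, hc, ?_⟩
  have hd := (hH c).deriv
  rw [hderiv] at hd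
  have hexp := Real.exp_ne_zero ((a/b) * c)
  have h0 : (a/b) * f.eval c + f.derivative.eval c = 0 := by
    rcases mul_eq_zero.mp hd.symm with h | h
    · exact absurd h hexp
    · exact h
  have : (a • f + b • f.derivative).eval c
      = b * ((a/b) * f.eval c + f.derivative.eval c) := by
    simp [eval_add, eval_smul, smul_eq_mul]
    field_simp
  rw [this, h0, mul_zero]

open Finset in
lemma aux_ivt_right (n : ℕ) (hn : 0 < n) (r : ℕ → ℝ) (R : ℝ)
    (hub : ∀ k, k < n → r k ≤ R) (hmem : ∃ k, k < n ∧ r k = R) (c : ℝ) (hc : 0 < c) :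
    ∃ x, R < x ∧ ∑ k ∈ Finset.range n, (x - r k)⁻¹ = c := by
  set ρ : ℝ → ℝ := fun x => ∑ k ∈ Finset.range n, (x - r k)⁻¹ with hρdef
  set x1 : ℝ := R + (2*c)⁻¹ with hx1def
  set x2 : ℝ := R + (n+1)/c with hx2def
  have hx1R : R < x1 := by
    have h9 : (0:ℝ) < (2*c)⁻¹ := by positivity
    show R < R + (2*c)⁻¹
    linarith
  have hx12 : x1 ≤ x2 := by
    rw [hx1def, hx2def]
    have h1 : (2*c)⁻¹ ≤ (n+1)/c := by
      rw [div_eq_mul_inv, ← one_div, one_div]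
      rw [mul_inv]
      have h2 : (2:ℝ)⁻¹ ≤ (n+1) := by
        have : (0:ℝ) ≤ n := Nat.cast_nonneg n
        norm_num; linarith
      have : (0:ℝ) < c⁻¹ := by positivity
      nlinarith
    linarith
  have hpos : ∀ x ∈ Set.Icc x1 x2, ∀ k, k < n → 0 < x - r k := by
    intro x hx k hk
    have := hub k hk
    have := hx.1
    have : (0:ℝ) < (2*c)⁻¹ := by positivity
    simp only [hx1def] at *
    linarith
  have hcont : ContinuousOn ρ (Set.Icc x1 x2) := by
    apply continuousOn_finset_sum
    intro k hk
    apply ContinuousOn.inv₀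
    · exact (continuous_id.sub continuous_const).continuousOn
    · intro x hx
      exact ne_of_gt (hpos x hx k (Finset.mem_range.mp hk))
  have hρx1 : c < ρ x1 := by
    obtain ⟨k0, hk0, hrk0⟩ := hmem
    have h1 : (x1 - r k0)⁻¹ = 2*c := by
      rw [hrk0]
      show (R + (2*c)⁻¹ - R)⁻¹ = 2*c
      rw [show R + (2*c)⁻¹ - R = (2*c)⁻¹ by ring, inv_inv]
    have h2 : (x1 - r k0)⁻¹ ≤ ρ x1 := by
      apply Finset.single_le_sum (f := fun k => (x1 - r k)⁻¹)
      · intro k hk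
        exact le_of_lt (inv_pos.mpr (hpos x1 (Set.left_mem_Icc.mpr hx12) k (Finset.mem_range.mp hk)))
      · exact Finset.mem_range.mpr hk0
    rw [h1] at h2
    linarith
  have hρx2 : ρ x2 < c := by
    have hx2R : (0:ℝ) < (n+1)/c := by positivity
    have hterm : ∀ k ∈ Finset.range n, (x2 - r k)⁻¹ ≤ (x2 - R)⁻¹ := by
      intro k hk
      apply inv_anti₀
      · rw [hx2def]; linarith
      · have := hub k (Finset.mem_range.mp hk); linarith
    calc ρ x2 ≤ ∑ _k ∈ Finset.range n, (x2 - R)⁻¹ := Finset.sum_le_sum hterm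
      _ = (n : ℝ) * (x2 - R)⁻¹ := by rw [Finset.sum_const, Finset.card_range, nsmul_eq_mul]
      _ < c := by
          have h : x2 - R = ((n:ℝ)+1)/c := by rw [hx2def]; ring
          rw [h, inv_div]
          have h2 : (n:ℝ)/((n:ℝ)+1) < 1 := by
            rw [div_lt_one (by positivity)]; linarith
          calc (n:ℝ) * (c/((n:ℝ)+1)) = c * ((n:ℝ)/((n:ℝ)+1)) := by ring
            _ < c * 1 := by nlinarith
            _ = c := mul_one c
  have hsub := intermediate_value_Icc' hx12 hcont
  have hcmem : c ∈ Set.Icc (ρ x2) (ρ x1) := ⟨le_of_lt hρx2, le_of_lt hρx1⟩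
  obtain ⟨x, hx, hρx⟩ := hsub hcmem
  exact ⟨x, lt_of_lt_of_le hx1R hx.1, hρx⟩

open Finset in
lemma aux_ivt_left (n : ℕ) (hn : 0 < n) (r : ℕ → ℝ) (R : ℝ)
    (hlb : ∀ k, k < n → R ≤ r k) (hmem : ∃ k, k < n ∧ r k = R) (c : ℝ) (hc : c < 0) :
    ∃ x, x < R ∧ ∑ k ∈ Finset.range n, (x - r k)⁻¹ = c := by
  obtain ⟨x', hx', hsum⟩ := aux_ivt_right n hn (fun k => -(r k)) (-R)
    (fun k hk => neg_le_neg (hlb k hk)) (by obtain ⟨k, hk, hrk⟩ := hmem; exact ⟨k, hk, by simp [hrk]⟩)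
    (-c) (by linarith)
  refine ⟨-x', by linarith, ?_⟩
  have : ∀ k ∈ Finset.range n, (-x' - r k)⁻¹ = -((x' - -(r k))⁻¹) := by
    intro k _
    rw [← inv_neg]
    congr 1
    ring
  rw [Finset.sum_congr rfl this, Finset.sum_neg_distrib]
  rw [hsum]; ring

open Finset in
lemma aux_small (g : Polynomial ℝ) (hg0 : g ≠ 0) (hdeg : g.natDegree ≤ 1)
    (z w : ℝ) (hz : g.IsRoot z) (hw : g.IsRoot w) : z = w := by
  classical
  by_contra hne
  have hle : ({z, w} : Finset ℝ).val ≤ g.roots := by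
    rw [Multiset.le_iff_count]
    intro x
    by_cases hx : x ∈ ({z, w} : Finset ℝ)
    · have h1 : Multiset.count x ({z, w} : Finset ℝ).val = 1 :=
        Multiset.count_eq_one_of_mem (Finset.nodup _) hx
      rw [h1, count_roots]
      rcases Finset.mem_insert.mp hx with rfl | hx'
      · exact (rootMultiplicity_pos hg0).mpr hz
      · rw [Finset.mem_singleton.mp hx']
        exact (rootMultiplicity_pos hg0).mpr hw
    · rw [Multiset.count_eq_zero_of_notMem (by simpa using hx)]
      exact Nat.zero_le _
  have h2 : Multiset.card ({z, w} : Finset ℝ).val = 2 := by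
    show ({z, w} : Finset ℝ).card = 2
    rw [Finset.card_insert_of_notMem (by simpa using hne), Finset.card_singleton]
  have := Multiset.card_le_card hle
  rw [h2] at this
  have := card_roots' g
  omega

open Finset in
lemma aux_gapmul (n : ℕ) (r : ℕ → ℝ) (δ : ℝ)
    (hcons : ∀ k, k + 1 < n → δ ≤ r (k+1) - r k) :
    ∀ i j, i < j → j < n → ((j - i : ℕ) : ℝ) * δ ≤ r j - r i := by
  have key : ∀ d i, i + d < n → ((d : ℕ) : ℝ) * δ ≤ r (i + d) - r i := by
    intro d
    induction d with
    | zero => intro i _; simp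
    | succ m ih =>
        intro i h
        have h1 := ih i (by omega)
        have h2 := hcons (i + m) (by omega)
        have : i + (m + 1) = (i + m) + 1 := by omega
        rw [this]
        push_cast
        push_cast at h1
        linarith
  intro i j hij hjn
  have h := key (j - i) i (by omega)
  rw [show i + (j - i) = j by omega] at h
  exact h

open Finset in
theorem stmt5 (f : Polynomial ℝ) (hf : SimpleRealRoots f) (hnc : 0 < f.natDegree) :
    ∀ a b : ℝ, (a, b) ≠ (0, 0) →
      SimpleRealRoots (a • f + b • Polynomial.derivative f) ∧
      rootSep f ≤ rootSep (a • f + b • Polynomial.derivative f) := by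
  classical
  obtain ⟨hf0, hcard, hnodup⟩ := hf
  obtain ⟨r, hmono, hroots_iff, heval, hderiveval⟩ := aux_struct f hf0 hcard hnodup hnc
  set n := f.natDegree with hndef
  set K := f.leadingCoeff with hKdef
  have hK : K ≠ 0 := leadingCoeff_ne_zero.mpr hf0
  have hinj : ∀ i j, i < n → j < n → r i = r j → i = j := by
    intro i j hi hj hij
    rcases lt_trichotomy i j with h | h | h
    · exact absurd hij (ne_of_lt (hmono i j h hj))
    · exact h
    · exact absurd hij.symm (ne_of_lt (hmono j i h hi))
  have hdroot : ∀ k, k < n → f.derivative.eval (r k) ≠ 0 :=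
    aux_deriv_root n K hK r hinj f hderiveval
  have hfne : ∀ x, (∀ k, k < n → r k ≠ x) → f.eval x ≠ 0 := by
    intro x hx
    rw [heval x]
    apply mul_ne_zero hK
    rw [Finset.prod_ne_zero_iff]
    intro k hk h
    exact hx k (Finset.mem_range.mp hk) (by linarith [sub_eq_zero.mp h])
  have hfroot : ∀ k, k < n → f.eval (r k) = 0 := by
    intro k hk
    exact (hroots_iff (r k)).mpr ⟨k, hk, rfl⟩
  intro a b hab
  set g := a • f + b • f.derivative with hgdef
  have hgeval : ∀ x, g.eval x = a * f.eval x + b * f.derivative.eval x := by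
    intro x
    rw [hgdef]
    simp [eval_add, eval_smul, smul_eq_mul]
  by_cases hb : b = 0
  · -- b = 0 : g = a • f
    have ha : a ≠ 0 := by
      rintro rfl
      rw [hb] at hab
      exact hab rfl
    have hg : g = a • f := by rw [hgdef, hb, zero_smul, add_zero]
    have hg0 : g ≠ 0 := by rw [hg]; exact smul_ne_zero ha hf0
    have hgroots : g.roots = f.roots := by rw [hg]; exact roots_smul_nonzero f ha
    have hgdeg : g.natDegree = n := by
      rw [hg, smul_eq_C_mul]
      exact natDegree_eq_of_degree_eq (degree_C_mul ha)
    have hmemr : ∀ z, g.IsRoot z → f.IsRoot z := by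
      intro z hz
      have : g.eval z = 0 := hz
      rw [hgeval z, hb] at this
      have : a * f.eval z = 0 := by linarith
      rcases mul_eq_zero.mp this with h | h
      · exact absurd h ha
      · exact h
    constructor
    · exact ⟨hg0, by rw [hgroots, hcard, hgdeg], by rw [hgroots]; exact hnodup⟩
    · refine le_iInf fun z => le_iInf fun w => le_iInf fun hz => le_iInf fun hw =>
        le_iInf fun hne => ?_
      exact iInf_le_of_le z (iInf_le_of_le w (iInf_le_of_le (hmemr z hz)
        (iInf_le_of_le (hmemr w hw) (iInf_le_of_le hne le_rfl))))
  · -- b ≠ 0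
    have hdf' : f.derivative ≠ 0 := by
      intro h
      exact hdroot 0 hnc (by rw [h]; simp)
    have hddn : f.derivative.natDegree = n - 1 :=
      natDegree_eq_of_degree_eq_some (degree_derivative_eq f hnc)
    have hnroot : ∀ z, g.IsRoot z → ∀ k, k < n → r k ≠ z := by
      intro z hz k hk h
      have hz' : g.eval z = 0 := hz
      rw [hgeval z, ← h, hfroot k hk, mul_zero, zero_add] at hz'
      rcases mul_eq_zero.mp hz' with h' | h'
      · exact hb h'
      · exact hdroot k hk h'
    have hgx : ∀ x, (∀ k, k < n → r k ≠ x) →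
        g.eval x = f.eval x * (a + b * ∑ k ∈ Finset.range n, (x - r k)⁻¹) := by
      intro x hx
      rw [hgeval x, aux_ratio n K r f heval hderiveval x hx]
      ring
    -- degree and nonvanishing of g
    have hg0deg : g ≠ 0 ∧ g.natDegree = (if a = 0 then n - 1 else n) := by
      by_cases ha : a = 0
      · have hg : g = b • f.derivative := by rw [hgdef, ha, zero_smul, zero_add]
        refine ⟨by rw [hg]; exact smul_ne_zero hb hdf', ?_⟩
        rw [if_pos ha, hg, smul_eq_C_mul]
        rw [natDegree_eq_of_degree_eq (degree_C_mul hb)]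
        exact hddn
      · have hd1 : (a • f).degree = f.degree := by
          rw [smul_eq_C_mul]; exact degree_C_mul ha
        have hd2 : (b • f.derivative).degree < (a • f).degree := by
          rw [hd1]
          exact lt_of_le_of_lt (degree_smul_le b f.derivative) (degree_derivative_lt hf0)
        have hdg : g.degree = f.degree := by
          rw [hgdef, degree_add_eq_left_of_degree_lt hd2, hd1]
        refine ⟨?_, ?_⟩
        · intro h
          rw [h, degree_zero] at hdg
          exact hf0 (degree_eq_bot.mp hdg.symm)
        · rw [if_neg ha]
          exact natDegree_eq_of_degree_eq hdg
      -- counting roots of g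
    obtain ⟨hg0, hgdeg⟩ := hg0deg
    have hgdegle : g.natDegree ≤ n := by
      rw [hgdeg]; split <;> omega
    have hmonole : ∀ i j, i ≤ j → j < n → r i ≤ r j := by
      intro i j hij hjn
      rcases eq_or_lt_of_le hij with rfl | h
      · exact le_refl _
      · exact le_of_lt (hmono i j h hjn)
    -- interior roots
    have hint : ∀ k, k + 1 < n → ∃ z, z ∈ Set.Ioo (r k) (r (k+1)) ∧ g.eval z = 0 := by
      intro k hk
      obtain ⟨c, hc, hgc⟩ := aux_rolle f a b hb (r k) (r (k+1))
        (hmono k (k+1) (by omega) hk) (hfroot k (by omega)) (hfroot (k+1) hk)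
      exact ⟨c, hc, by rw [hgdef]; exact hgc⟩
    set sfun : ℕ → ℝ := fun k => if h : k + 1 < n then Classical.choose (hint k h) else 0
      with hsfundef
    have hsfun : ∀ k, k + 1 < n → sfun k ∈ Set.Ioo (r k) (r (k+1)) ∧ g.eval (sfun k) = 0 := by
      intro k h
      rw [hsfundef]
      simp only [dif_pos h]
      exact Classical.choose_spec (hint k h)
    set T0 : Finset ℝ := (Finset.range (n-1)).image sfun with hT0def
    have hT0root : ∀ z ∈ T0, g.IsRoot z := by
      intro z hz
      rw [hT0def] at hz
      obtain ⟨k, hk, rfl⟩ := Finset.mem_image.mp hz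
      exact (hsfun k (by have := Finset.mem_range.mp hk; omega)).2
    have hsltr : ∀ k l, k + 1 < n → k < l → l < n → sfun k < r l := by
      intro k l hk hkl hln
      calc sfun k < r (k+1) := (hsfun k hk).1.2
        _ ≤ r l := hmonole (k+1) l (by omega) hln
    have hrlts : ∀ k l, l + 1 < n → k ≤ l → r k < sfun l := by
      intro k l hl hkl
      calc r k ≤ r l := hmonole k l hkl (by omega)
        _ < sfun l := (hsfun l hl).1.1
    have hT0card : T0.card = n - 1 := by
      rw [hT0def, Finset.card_image_of_injOn, Finset.card_range]
      intro k hk l hl h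
      simp only [Finset.coe_range, Set.mem_Iio] at hk hl
      by_contra hne
      rcases lt_or_gt_of_ne hne with hlt | hlt
      · have := hsltr k l (by omega) hlt (by omega)
        have := hrlts l l (by omega) (le_refl l)
        have h2 : sfun k < sfun l := by linarith
        rw [h] at h2; exact lt_irrefl _ h2
      · have := hsltr l k (by omega) hlt (by omega)
        have := hrlts k k (by omega) (le_refl k)
        have h2 : sfun l < sfun k := by linarith
        rw [h] at h2; exact lt_irrefl _ h2
    -- sum equation at roots of g
    have hsum_eq : ∀ z, g.IsRoot z → ∑ k ∈ Finset.range n, (z - r k)⁻¹ = -(a/b) := by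
      intro z hz
      have hnr := hnroot z hz
      have hz' : g.eval z = 0 := hz
      rw [hgx z (fun k hk => hnr k hk)] at hz'
      rcases mul_eq_zero.mp hz' with h | h
      · exact absurd h (hfne z (fun k hk => hnr k hk))
      · rw [show -(a/b) = (-a)/b by ring, eq_div_iff hb]
        linear_combination h
    constructor
    · -- SimpleRealRoots g
      refine ⟨hg0, ?_⟩
      by_cases ha : a = 0
      · have hfin := aux_count_finish g hg0 T0 hT0root (by rw [hgdeg, if_pos ha, hT0card])
        exact hfin
      · -- build outer root
        have hc0 : -(a/b) ≠ 0 := by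
          simp only [neg_ne_zero]
          exact div_ne_zero ha hb
        have houter : ∃ zo, g.eval zo = 0 ∧ (∀ k, k < n - 1 → sfun k ≠ zo) := by
          rcases lt_or_gt_of_ne hc0 with hc | hc
          · obtain ⟨zo, hzo, hzsum⟩ := aux_ivt_left n hnc r (r 0)
              (fun k hk => hmonole 0 k (Nat.zero_le k) hk) ⟨0, hnc, rfl⟩ (-(a/b)) hc
            have hznr : ∀ k, k < n → r k ≠ zo := by
              intro k hk h
              have := hmonole 0 k (Nat.zero_le k) hk
              linarith [h ▸ this]
            refine ⟨zo, ?_, ?_⟩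
            · rw [hgx zo hznr, hzsum]
              have : a + b * -(a/b) = 0 := by field_simp; ring
              rw [this, mul_zero]
            · intro k hk h
              have h1 := hrlts 0 k (by omega) (Nat.zero_le k)
              have h2 := hmonole 0 0 (le_refl 0) hnc
              rw [h] at h1
              linarith
          · obtain ⟨zo, hzo, hzsum⟩ := aux_ivt_right n hnc r (r (n-1))
              (fun k hk => hmonole k (n-1) (by omega) (by omega)) ⟨n-1, by omega, rfl⟩ (-(a/b)) hc
            have hznr : ∀ k, k < n → r k ≠ zo := by
              intro k hk h
              have := hmonole k (n-1) (by omega) (by omega)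
              linarith [h ▸ this]
            refine ⟨zo, ?_, ?_⟩
            · rw [hgx zo hznr, hzsum]
              have : a + b * -(a/b) = 0 := by field_simp; ring
              rw [this, mul_zero]
            · intro k hk h
              have h1 := hsltr k (n-1) (by omega) (by omega) (by omega)
              rw [h] at h1
              linarith
        obtain ⟨zo, hzo, hzo_not⟩ := houter
        have hzonot : zo ∉ T0 := by
          rw [hT0def]
          intro h
          obtain ⟨k, hk, hkz⟩ := Finset.mem_image.mp h
          exact hzo_not k (Finset.mem_range.mp hk) hkz
        have hTcard : (insert zo T0).card = n := by
          rw [Finset.card_insert_of_notMem hzonot, hT0card]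
          omega
        have hTroot : ∀ z ∈ insert zo T0, g.IsRoot z := by
          intro z hz
          rcases Finset.mem_insert.mp hz with rfl | hz'
          · exact hzo
          · exact hT0root z hz'
        exact aux_count_finish g hg0 (insert zo T0) hTroot (by rw [hgdeg, if_neg ha, hTcard])
    · -- separation
      by_cases hn2 : n < 2
      · -- at most one root of g
        refine le_iInf fun z => le_iInf fun w => le_iInf fun hz => le_iInf fun hw =>
          le_iInf fun hne => ?_
        exact absurd (aux_small g hg0 (by omega) z w hz hw) hne
      · push_neg at hn2
        have hGne : ((Finset.range (n-1)).image (fun k => r (k+1) - r k)).Nonempty := by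
          apply Finset.Nonempty.image
          rw [Finset.nonempty_range_iff]
          omega
        set δ := ((Finset.range (n-1)).image (fun k => r (k+1) - r k)).min' hGne with hδdef
        obtain ⟨k0, hk0, hk0eq⟩ : ∃ k0, k0 < n - 1 ∧ r (k0+1) - r k0 = δ := by
          obtain ⟨k, hk, hkeq⟩ := Finset.mem_image.mp (Finset.min'_mem _ hGne)
          exact ⟨k, Finset.mem_range.mp hk, hkeq⟩
        have hδpos : 0 < δ := by
          rw [← hk0eq]
          have := hmono k0 (k0+1) (by omega) (by omega)
          linarith
        have hδcons : ∀ k, k + 1 < n → δ ≤ r (k+1) - r k := by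
          intro k hk
          apply Finset.min'_le
          exact Finset.mem_image.mpr ⟨k, Finset.mem_range.mpr (by omega), rfl⟩
        have hgap := aux_gapmul n r δ hδcons
        have hfsep : rootSep f ≤ ENNReal.ofReal δ := by
          have h1 : f.IsRoot (r k0) := (hroots_iff _).mpr ⟨k0, by omega, rfl⟩
          have h2 : f.IsRoot (r (k0+1)) := (hroots_iff _).mpr ⟨k0+1, by omega, rfl⟩
          have hne : r k0 ≠ r (k0+1) := ne_of_lt (hmono k0 (k0+1) (by omega) (by omega))
          have habs : |r k0 - r (k0+1)| = δ := by
            rw [abs_sub_comm, ← hk0eq]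
            exact abs_of_pos (by rw [hk0eq]; exact hδpos)
          calc rootSep f ≤ ENNReal.ofReal |r k0 - r (k0+1)| :=
                iInf_le_of_le (r k0) (iInf_le_of_le (r (k0+1)) (iInf_le_of_le h1
                  (iInf_le_of_le h2 (iInf_le_of_le hne le_rfl))))
            _ = ENNReal.ofReal δ := by rw [habs]
        have hgsep : ∀ z w, g.IsRoot z → g.IsRoot w → z < w → δ ≤ w - z := by
          intro z w hz hw hzw
          by_contra hlt
          push_neg at hlt
          have hsz := hsum_eq z hz
          have hsw := hsum_eq w hw
          have hzn := hnroot z hz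
          have hwn := hnroot w hw
          have hdiff : ∀ k ∈ Finset.range n,
              (z - r k)⁻¹ - (w - r k)⁻¹ = (w - z) * ((z - r k) * (w - r k))⁻¹ := by
            intro k hk
            have h1 : z - r k ≠ 0 :=
              sub_ne_zero.mpr (fun h => hzn k (Finset.mem_range.mp hk) h.symm)
            have h2 : w - r k ≠ 0 :=
              sub_ne_zero.mpr (fun h => hwn k (Finset.mem_range.mp hk) h.symm)
            field_simp
            try ring
          have hcg : ∑ k ∈ Finset.range n, ((z - r k)⁻¹ - (w - r k)⁻¹)
              = (w - z) * ∑ k ∈ Finset.range n, ((z - r k) * (w - r k))⁻¹ := by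
            rw [Finset.mul_sum]
            exact Finset.sum_congr rfl hdiff
          have h0 : (w - z) * ∑ k ∈ Finset.range n, ((z - r k) * (w - r k))⁻¹ = 0 := by
            rw [← hcg, Finset.sum_sub_distrib, hsz, hsw, sub_self]
          have hwz : w - z ≠ 0 := by
            intro hh
            have := sub_eq_zero.mp hh
            linarith
          have hS0 : ∑ k ∈ Finset.range n, ((z - r k) * (w - r k))⁻¹ = 0 := by
            rcases mul_eq_zero.mp h0 with h | h
            · exact absurd h hwz
            · exact h
          exact aux_key n hnc r δ z w hδpos hgap (fun i hi => hzn i hi)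
            (fun i hi => hwn i hi) hzw hlt hS0
        refine le_iInf fun z => le_iInf fun w => le_iInf fun hz => le_iInf fun hw =>
          le_iInf fun hne => ?_
        refine hfsep.trans (ENNReal.ofReal_le_ofReal ?_)
        rcases lt_or_gt_of_ne hne with h | h
        · have := hgsep z w hz hw h
          rw [abs_sub_comm, abs_of_pos (by linarith)]
          linarith
        · have := hgsep w z hw hz h
          rw [abs_of_pos (by linarith)]
          linarith
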